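/- Let k be a field of characteristic 3, let ε₁ ∈ k with ε₁ ≠ 0, let φ₁ ∈ k with φ₁ ≠ 0, and let φ₂, φ₃, γ₁, γ₂, γ₃, γ₄, γ₅ ∈ k. Set b₂ = ε₁t², b₄ = t²(φ₃t² + φ₂t + φ₁), b₆ = t²(γ₅t⁴ + γ₄t³ + γ₃t² + γ₂t + γ₁), and Δ = −b₂²(b₂b₆ − b₄²) + b₄³. Then for all α ∈ k and all a ∈ k with a ≠ 0 one has Δ ≠ α·t⁶(t−a)³(t−1)²(t+1). (This shows the configurations IV I₃ I₂ I₁ and IV I₅ I₁, with the type IV fibre of Lang's case 3C over t = 0 and the I₂ and I₁ fibres normalized to 1 and −1, do not exist on a rational elliptic surface in characteristic 3.) -/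
import Mathlib


open Polynomial

theorem stmt11 {k : Type*} [Field k] [CharP k 3]
    (ε₁ : k) (hε₁ : ε₁ ≠ 0) (φ₁ : k) (hφ₁ : φ₁ ≠ 0)
    (φ₂ φ₃ γ₁ γ₂ γ₃ γ₄ γ₅ : k)
    (b₂ b₄ b₆ Δ : k[X])
    (hb₂ : b₂ = C ε₁ * X ^ 2)
    (hb₄ : b₄ = X ^ 2 * (C φ₃ * X ^ 2 + C φ₂ * X + C φ₁))
    (hb₆ : b₆ = X ^ 2 * (C γ₅ * X ^ 4 + C γ₄ * X ^ 3 + C γ₃ * X ^ 2 + C γ₂ * X + C γ₁))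
    (hΔ : Δ = -b₂ ^ 2 * (b₂ * b₆ - b₄ ^ 2) + b₄ ^ 3) :
    ∀ α a : k, a ≠ 0 →
      Δ ≠ C α * (X ^ 6 * (X - C a) ^ 3 * (X - 1) ^ 2 * (X + 1)) := by
  intro α a ha h
  subst hb₂ hb₄ hb₆ hΔ
  have h3 : (3 : k[X]) = 0 := by simpa using CharP.cast_eq_zero k[X] 3
  have h2 : (2 : k[X]) = -1 := by linear_combination h3
  have h6 : (6 : k[X]) = 0 := by linear_combination 2 * h3
  ring_nf at h
  rw [h2, h3, h6] at h
  ring_nf at h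
  have h7 := congrArg (fun p => coeff p 7) h
  have h6' := congrArg (fun p => coeff p 6) h
  simp only [coeff_add, coeff_sub, coeff_neg, ← C_pow] at h7 h6'
  simp only [coeff_mul_C, coeff_C_mul, coeff_X_pow] at h7 h6'
  norm_num at h7 h6'
  rcases h7 with h7 | h7
  · rw [h7] at h6'
    simp at h6'
    exact hφ₁ h6'
  · exact ha h7
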